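/- Let k ≥ 2 be an integer. The matrices A = [[1,k],[0,1]] and B = [[1,0],[-k,1]] generate a free subgroup of rank 2 in SL₂(ℝ). -/

import Mathlib

open UpperHalfPlane Matrix

private lemma inv_re_facts (z : ℍ) :
    ((z : ℂ)⁻¹).re * Complex.normSq (z : ℂ) = (z : ℂ).re := by
  have h := Complex.inv_re (z : ℂ)
  rw [h, div_mul_cancel₀]
  exact z.normSq_ne_zero

/-- For an integer `k ≥ 2`, the matrices `A = [[1,k],[0,1]]` and `B = [[1,0],[-k,1]]`
generate a free subgroup of rank 2 in `SL₂(ℝ)`: the homomorphism from the free group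
on two generators sending the generators to `A` and `B` is injective. -/
theorem stmt_2 (k : ℤ) (hk : 2 ≤ k)
    (A B : Matrix.SpecialLinearGroup (Fin 2) ℝ)
    (hA : (A : Matrix (Fin 2) (Fin 2) ℝ) = !![1, (k : ℝ); 0, 1])
    (hB : (B : Matrix (Fin 2) (Fin 2) ℝ) = !![1, 0; -(k : ℝ), 1]) :
    Function.Injective
      (FreeGroup.lift (![A, B] : Fin 2 → Matrix.SpecialLinearGroup (Fin 2) ℝ)) := by
  have hk2 : (2 : ℝ) ≤ (k : ℝ) := by exact_mod_cast hk
  -- action formulas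
  have hAf : ∀ z : ℍ, ((A • z : ℍ) : ℂ) = (z : ℂ) + (k : ℝ) := by
    intro z
    rw [UpperHalfPlane.specialLinearGroup_apply]
    simp [coe_mk, hA]
  have hBf : ∀ z : ℍ, (((B • z : ℍ) : ℂ))⁻¹ = (z : ℂ)⁻¹ - (k : ℝ) := by
    intro z
    rw [UpperHalfPlane.specialLinearGroup_apply]
    simp only [coe_mk, hB]
    have hz := z.ne_zero
    have hden : (-(k : ℝ) : ℂ) * z + 1 ≠ 0 := by
      have := UpperHalfPlane.linear_ne_zero (cd := ![-(k : ℝ), 1]) z (by simp)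
      simpa using this
    simp only [Matrix.of_apply, Matrix.cons_val', Matrix.cons_val_zero, Matrix.cons_val_one, Matrix.empty_val', Matrix.cons_val_fin_one, Algebra.algebraMap_self, RingHom.id_apply, Complex.ofReal_one, Complex.ofReal_zero, Complex.ofReal_neg, mul_one, add_zero] at hden ⊢
    field_simp
    ring
  have hAre : ∀ z : ℍ, ((A • z : ℍ) : ℂ).re = (z : ℂ).re + (k : ℝ) := by
    intro z; rw [hAf]; simp
  have hBre : ∀ z : ℍ, (((B • z : ℍ) : ℂ))⁻¹.re = ((z : ℂ)⁻¹).re - (k : ℝ) := by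
    intro z; rw [hBf]; simp
  -- basic real-part facts
  have hkey : ∀ z : ℍ, ((z : ℂ)⁻¹).re * ((z : ℂ).re ^ 2 + (z : ℂ).im ^ 2) = (z : ℂ).re := by
    intro z
    have := inv_re_facts z
    rw [Complex.normSq_apply] at this
    nlinarith [this]
  have him : ∀ z : ℍ, 0 < (z : ℂ).im := fun z => z.2
  -- ping pong sets
  set X : Fin 2 → Set ℍ :=
    ![{z : ℍ | 1 ≤ (z : ℂ).re}, {z : ℍ | ((z : ℂ)⁻¹).re ≤ -1}] with hX_def
  set Y : Fin 2 → Set ℍ :=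
    ![{z : ℍ | (z : ℂ).re ≤ -1}, {z : ℍ | 1 ≤ ((z : ℂ)⁻¹).re}] with hY_def
  have hX0 : ∀ z : ℍ, z ∈ X 0 ↔ 1 ≤ (z : ℂ).re := fun z => by simp [hX_def]
  have hX1 : ∀ z : ℍ, z ∈ X 1 ↔ ((z : ℂ)⁻¹).re ≤ -1 := fun z => by simp [hX_def]
  have hY0 : ∀ z : ℍ, z ∈ Y 0 ↔ (z : ℂ).re ≤ -1 := fun z => by simp [hY_def]
  have hY1 : ∀ z : ℍ, z ∈ Y 1 ↔ 1 ≤ ((z : ℂ)⁻¹).re := fun z => by simp [hY_def]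
  -- the four sets are mutually exclusive on ℍ
  have hx0y1 : ∀ z : ℍ, 1 ≤ (z : ℂ).re → ¬ (1 ≤ ((z : ℂ)⁻¹).re) := by
    intro z h1 h2
    nlinarith [hkey z, him z, sq_nonneg (z : ℂ).re]
  have hx0x1 : ∀ z : ℍ, 1 ≤ (z : ℂ).re → ¬ (((z : ℂ)⁻¹).re ≤ -1) := by
    intro z h1 h2
    nlinarith [hkey z, him z, sq_nonneg (z : ℂ).re]
  have hy0y1 : ∀ z : ℍ, (z : ℂ).re ≤ -1 → ¬ (1 ≤ ((z : ℂ)⁻¹).re) := by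
    intro z h1 h2
    nlinarith [hkey z, him z, sq_nonneg (z : ℂ).re]
  have hy0x1 : ∀ z : ℍ, (z : ℂ).re ≤ -1 → ¬ (((z : ℂ)⁻¹).re ≤ -1) := by
    intro z h1 h2
    nlinarith [hkey z, him z, sq_nonneg (z : ℂ).re]
  have hA0 : (![A, B] : Fin 2 → _) 0 = A := rfl
  have hB1 : (![A, B] : Fin 2 → _) 1 = B := rfl
  apply FreeGroup.injective_lift_of_ping_pong ![A, B] X Y
  · -- nonempty
    intro i
    match i with
    | 0 =>
      refine ⟨UpperHalfPlane.mk (1 + Complex.I) (by simp), ?_⟩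
      rw [hX0]
      simp
    | 1 =>
      refine ⟨UpperHalfPlane.mk (-(1/2) + (1/2) * Complex.I) (by simp), ?_⟩
      rw [hX1, coe_mk, Complex.inv_re]
      simp [Complex.normSq_apply]
      norm_num
  · -- X pairwise disjoint
    intro i j hij
    have key : Disjoint (X 0) (X 1) := by
      rw [Set.disjoint_left]
      intro z hz1 hz2
      rw [hX0] at hz1; rw [hX1] at hz2
      exact hx0x1 z hz1 hz2
    match i, j with
    | 0, 0 => exact absurd rfl hij
    | 1, 1 => exact absurd rfl hij
    | 0, 1 => exact key
    | 1, 0 => exact key.symm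
  · -- Y pairwise disjoint
    intro i j hij
    have key : Disjoint (Y 0) (Y 1) := by
      rw [Set.disjoint_left]
      intro z hz1 hz2
      rw [hY0] at hz1; rw [hY1] at hz2
      exact hy0y1 z hz1 hz2
    match i, j with
    | 0, 0 => exact absurd rfl hij
    | 1, 1 => exact absurd rfl hij
    | 0, 1 => exact key
    | 1, 0 => exact key.symm
  · -- X i disjoint from Y j
    intro i j
    match i, j with
    | 0, 0 =>
      rw [Set.disjoint_left]
      intro z hz1 hz2
      rw [hX0] at hz1; rw [hY0] at hz2; linarith
    | 0, 1 =>
      rw [Set.disjoint_left]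
      intro z hz1 hz2
      rw [hX0] at hz1; rw [hY1] at hz2; exact hx0y1 z hz1 hz2
    | 1, 0 =>
      rw [Set.disjoint_left]
      intro z hz1 hz2
      rw [hX1] at hz1; rw [hY0] at hz2; exact hy0x1 z hz2 hz1
    | 1, 1 =>
      rw [Set.disjoint_left]
      intro z hz1 hz2
      rw [hX1] at hz1; rw [hY1] at hz2; linarith
  · -- a i • (Y i)ᶜ ⊆ X i
    intro i
    match i with
    | 0 =>
      rw [hA0]
      intro w hw
      obtain ⟨z, hz, rfl⟩ := hw
      rw [Set.mem_compl_iff, hY0] at hz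
      push_neg at hz
      show A • z ∈ X 0
      rw [hX0, hAre z]
      linarith
    | 1 =>
      rw [hB1]
      intro w hw
      obtain ⟨z, hz, rfl⟩ := hw
      rw [Set.mem_compl_iff, hY1] at hz
      push_neg at hz
      show B • z ∈ X 1
      rw [hX1, hBre z]
      linarith
  · -- (a i)⁻¹ • (X i)ᶜ ⊆ Y i
    intro i
    match i with
    | 0 =>
      have : (![A, B]⁻¹ : Fin 2 → _) 0 = A⁻¹ := rfl
      rw [this]
      intro w hw
      obtain ⟨z, hz, rfl⟩ := hw
      rw [Set.mem_compl_iff, hX0] at hz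
      push_neg at hz
      show A⁻¹ • z ∈ Y 0
      rw [hY0]
      have h := hAre (A⁻¹ • z)
      rw [smul_inv_smul] at h
      linarith
    | 1 =>
      have : (![A, B]⁻¹ : Fin 2 → _) 1 = B⁻¹ := rfl
      rw [this]
      intro w hw
      obtain ⟨z, hz, rfl⟩ := hw
      rw [Set.mem_compl_iff, hX1] at hz
      push_neg at hz
      show B⁻¹ • z ∈ Y 1
      rw [hY1]
      have h := hBre (B⁻¹ • z)
      rw [smul_inv_smul] at h
      linarith
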